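/- Bialternant formula for one-row shapes: for λ = (k) a single row and n variables, g_{(k)}(x_1,…,x_n) = h_k(x_1,…,x_n) = det[h_{λ_i + n - i}(1^{i-1}, x_j)] / ∏_{i<j}(x_i - x_j) where λ = (k, 0, …, 0); i.e., det of the n×n matrix with (i,j) entry h_{λ_i + n - i}(1^{i-1}, x_j) equals h_k(x_1,…,x_n) · ∏_{i<j}(x_i - x_j), where λ_1 = k and λ_i = 0 for i ≥ 2. -/

import Mathlib

/-- The complete homogeneous symmetric polynomial of degree `n` evaluated at `x : Fin N → R`. -/
def hpoly {R : Type*} [CommSemiring R] {N : ℕ} (n : ℕ) (x : Fin N → R) : R :=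
  ∑ d ∈ Finset.Nat.antidiagonalTuple N n, ∏ i, x i ^ d i


section BialternantAux
open Polynomial Matrix

lemma geom_mul {R : Type*} [CommRing R] (y : R) :
    (1 - PowerSeries.C y * PowerSeries.X) * PowerSeries.mk (fun a => y ^ a) = 1 := by
  ext d
  rw [sub_mul, one_mul, map_sub, mul_assoc]
  cases d with
  | zero => simp
  | succ d =>
    rw [PowerSeries.coeff_C_mul, PowerSeries.coeff_succ_X_mul]
    simp [pow_succ, mul_comm]

lemma hpoly_mk {R : Type*} [CommRing R] {N : ℕ} (x : Fin N → R) :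
    PowerSeries.mk (fun m => hpoly m x)
      = ∏ i, PowerSeries.mk (fun a => x i ^ a) := by
  ext m
  rw [PowerSeries.coeff_mk, hpoly]
  rw [← PowerSeries.coeff_mk m (fun m => (∑ d ∈ Finset.Nat.antidiagonalTuple N m, ∏ i, x i ^ d i : R))]
  rw [PowerSeries.coeff_mk, PowerSeries.coeff_prod]
  refine Finset.sum_nbij' (fun d => Finsupp.equivFunOnFinite.symm d)
    (fun l => Finsupp.equivFunOnFinite l) ?_ ?_ ?_ ?_ ?_
  · intro d hd
    rw [Finset.Nat.mem_antidiagonalTuple] at hd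
    rw [Finset.mem_finsuppAntidiag]
    exact ⟨by simpa using hd, Finset.subset_univ _⟩
  · intro l hl
    rw [Finset.mem_finsuppAntidiag] at hl
    rw [Finset.Nat.mem_antidiagonalTuple]
    simpa using hl.1
  · intro d _; simp
  · intro l _; simp
  · intro d _
    simp [PowerSeries.coeff_mk]

lemma nat_choose_sum (i d : ℕ) :
    ∑ a ∈ Finset.range (d+1), Nat.choose (i + a - 1) a = Nat.choose (i + d) d := by
  cases i with
  | zero =>
    rw [Finset.sum_eq_single 0]
    · simp
    · intro a _ ha
      simp only [Nat.zero_add]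
      exact Nat.choose_eq_zero_of_lt (by omega)
    · simp
  | succ j =>
    have h1 : ∀ a, Nat.choose (j + 1 + a - 1) a = Nat.choose (j + a) j := by
      intro a
      rw [show j + 1 + a - 1 = j + a by omega]
      rw [← Nat.choose_symm (by omega : j ≤ j + a), Nat.add_sub_cancel_left]
    calc ∑ a ∈ Finset.range (d+1), Nat.choose (j + 1 + a - 1) a
        = ∑ a ∈ Finset.range (d+1), Nat.choose (j + a) j := by simp_rw [h1]
      _ = ∑ m ∈ Finset.Icc j (j + d), Nat.choose m j := by
          rw [← Finset.Ico_add_one_right_eq_Icc, Finset.sum_Ico_eq_sum_range,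
            show j + d + 1 - j = d + 1 by omega]
      _ = Nat.choose (j + d + 1) (j + 1) := Nat.sum_Icc_choose _ _
      _ = Nat.choose (j + 1 + d) d := by
          rw [show j + d + 1 = j + 1 + d by omega, ← Nat.choose_symm (by omega : d ≤ j + 1 + d)]
          congr 1; omega

lemma ones_pow {R : Type*} [CommRing R] (i : ℕ) :
    (PowerSeries.mk (fun _ => (1:R)))^i
      = PowerSeries.mk (fun a => (Nat.choose (i + a - 1) a : R)) := by
  induction i with
  | zero =>
    ext a
    rw [pow_zero, PowerSeries.coeff_mk, PowerSeries.coeff_one]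
    cases a with
    | zero => simp
    | succ a => simp [Nat.choose_eq_zero_of_lt (by omega : a + 1 - 1 < a + 1)]
  | succ i ih =>
    ext d
    rw [pow_succ, ih, PowerSeries.coeff_mul, Finset.Nat.sum_antidiagonal_eq_sum_range_succ_mk]
    simp only [PowerSeries.coeff_mk, mul_one]
    rw [← Nat.cast_sum, nat_choose_sum]
    congr 2
    omega

lemma hpoly_ones {R : Type*} [CommRing R] (i m : ℕ) (y : R) :
    hpoly m (Fin.append (fun _ : Fin i => (1:R)) ![y])
      = ∑ ab ∈ Finset.HasAntidiagonal.antidiagonal m, (Nat.choose (i + ab.1 - 1) ab.1 : R) * y ^ ab.2 := by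
  have h0 : hpoly m (Fin.append (fun _ : Fin i => (1:R)) ![y])
      = PowerSeries.coeff m (PowerSeries.mk (fun a => (Nat.choose (i + a - 1) a : R))
          * PowerSeries.mk (fun a => y ^ a)) := by
    rw [← ones_pow, ← PowerSeries.coeff_mk m (fun m => hpoly m (Fin.append _ ![y])), hpoly_mk]
    congr 1
    rw [Fin.prod_univ_add (f := fun t => PowerSeries.mk fun a =>
      (Fin.append (fun _ : Fin i => (1:R)) ![y]) t ^ a)]
    congr 1
    · rw [Finset.prod_congr rfl (fun t _ => ?_), Finset.prod_const, Finset.card_univ,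
        Fintype.card_fin]
      ext a
      rw [Fin.append_left]
      simp
    · simp [Fin.append_right]
  rw [h0, PowerSeries.coeff_mul]
  simp

lemma hpoly_zero {R : Type*} [CommRing R] {N : ℕ} (x : Fin N → R) : hpoly 0 x = 1 := by
  rw [hpoly, Finset.Nat.antidiagonalTuple_zero_right, Finset.sum_singleton]
  simp

lemma natDegree_linear_le' {R : Type*} [CommRing R] (c : R) : (X - C c).natDegree ≤ 1 :=
  (natDegree_sub_le X (C c)).trans (by simp [natDegree_X_le])

lemma natDegree_prod_linear_le {R : Type*} [CommRing R] {ι : Type*} (s : Finset ι) (y : ι → R) :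
    (∏ i ∈ s, (X - C (y i))).natDegree ≤ s.card := by
  refine (natDegree_prod_le _ _).trans ?_
  have := Finset.sum_le_card_nsmul s (fun i => (X - C (y i)).natDegree) 1
    (fun i _ => natDegree_linear_le' (y i))
  simpa using this

lemma reflect_one_linear {R : Type*} [CommRing R] (c : R) :
    reflect 1 (X - C c) = 1 - C c * X := by
  ext i
  rw [coeff_reflect]
  match i with
  | 0 => simp [revAt_le]
  | 1 => simp [revAt_le, Polynomial.coeff_one]
  | (j+2) =>
    rw [Polynomial.revAt_eq_self_of_lt (by omega)]
    simp [Polynomial.coeff_one, Polynomial.coeff_X]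

lemma reflect_prod_linear {R : Type*} [CommRing R] {ι : Type*} [DecidableEq ι] (s : Finset ι)
    (y : ι → R) :
    reflect s.card (∏ i ∈ s, (X - C (y i))) = ∏ i ∈ s, (1 - C (y i) * X) := by
  induction s using Finset.induction_on with
  | empty => simp
  | @insert a s ha ih =>
    rw [Finset.prod_insert ha, Finset.prod_insert ha, Finset.card_insert_of_notMem ha,
      show s.card + 1 = 1 + s.card by omega,
      reflect_mul _ _ (natDegree_linear_le' (y a)) (natDegree_prod_linear_le s y),
      reflect_one_linear, ih]

lemma reflect_finset_sum {R : Type*} [CommRing R] {ι : Type*} (N : ℕ) (s : Finset ι)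
    (f : ι → R[X]) : reflect N (∑ i ∈ s, f i) = ∑ i ∈ s, reflect N (f i) := by
  classical
  induction s using Finset.induction_on with
  | empty => simp
  | @insert a s ha ih => rw [Finset.sum_insert ha, Finset.sum_insert ha, reflect_add, ih]

lemma exists_P {R : Type*} [CommRing R] (n k : ℕ) (hn : 1 ≤ n) (x : Fin n → R) :
    ∃ P : Polynomial R, (∀ m, n ≤ m → P.coeff m = 0) ∧ P.coeff (n-1) = hpoly k x ∧
      ∀ y : R, (∏ i, (y - x i)) = 0 → P.eval y = y ^ (k + (n-1)) := by
  set p : R[X] := ∏ i, (X - C (x i)) with hp_def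
  set Gp : R[X] := ∏ i, (1 - C (x i) * X) with hGp_def
  set q : R[X] := ∑ s ∈ Finset.range k, C (hpoly s x) * X ^ (k-1-s) with hq_def
  -- the power series identity
  have hps : (PowerSeries.mk fun m => hpoly m x) * (Gp : PowerSeries R) = 1 := by
      have hcoe : (Gp : PowerSeries R) = ∏ i, (1 - PowerSeries.C (x i) * PowerSeries.X) := by
        rw [hGp_def, ← Polynomial.coeToPowerSeries.ringHom_apply, map_prod]
        exact Finset.prod_congr rfl fun i _ => by
          simp [Polynomial.coeToPowerSeries.ringHom_apply]
      rw [hcoe, hpoly_mk, ← Finset.prod_mul_distrib]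
      rw [Finset.prod_congr rfl (fun i _ => mul_comm _ _)]
      rw [Finset.prod_congr rfl (fun i _ => geom_mul (x i))]
      simp
  have hfull : ∀ m, ∑ ab ∈ Finset.HasAntidiagonal.antidiagonal m, hpoly ab.1 x * Gp.coeff ab.2
      = if m = 0 then 1 else 0 := by
    intro m
    have h := congrArg (PowerSeries.coeff m) hps
    rwa [PowerSeries.coeff_mul, PowerSeries.coeff_one,
      Finset.sum_congr rfl (fun ab _ => by
        rw [PowerSeries.coeff_mk, Polynomial.coeff_coe])] at h
  have hGp0 : Gp.coeff 0 = 1 := by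
    have h := hfull 0
    simpa [hpoly_zero] using h
  have hp_deg : p.natDegree ≤ n := by
    simpa using natDegree_prod_linear_le (Finset.univ : Finset (Fin n)) x
  have key : ∀ m, n-1 ≤ m → (X ^ (k + (n-1)) - q * p).coeff m
      = if m = n-1 then hpoly k x else 0 := by
    intro m hm
    rcases Nat.eq_zero_or_pos k with hk0 | hk1
    · subst hk0
      simp only [hq_def, Finset.range_zero, Finset.sum_empty, zero_mul, sub_zero, zero_add,
        coeff_X_pow]
      by_cases h : m = n - 1 <;> simp [h, eq_comm, hpoly_zero]
    -- now k ≥ 1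
    · have hq_deg : q.natDegree ≤ k - 1 := by
        refine (natDegree_sum_le _ _).trans ?_
        rw [Finset.fold_max_le]
        refine ⟨by omega, fun s hs => ?_⟩
        exact (natDegree_C_mul_X_pow_le _ _).trans (by omega)
      set Qt : R[X] := ∑ s ∈ Finset.range k, C (hpoly s x) * X ^ s with hQt_def
      have hrq : reflect (k-1) q = Qt := by
        rw [hq_def, reflect_finset_sum, hQt_def]
        refine Finset.sum_congr rfl fun s hs => ?_
        rw [Finset.mem_range] at hs
        rw [reflect_C_mul_X_pow, revAt_le (by omega : k-1-s ≤ k-1)]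
        congr 2
        omega
      have hGp' : reflect n p = Gp := by
        have h := reflect_prod_linear (Finset.univ : Finset (Fin n)) x
        simpa using h
      have hreflqp : reflect (k-1+n) (q*p) = Qt * Gp := by
        rw [reflect_mul _ _ hq_deg hp_deg, hrq, hGp']
      have hqp_coeff : ∀ m', m' ≤ k-1+n → (q*p).coeff (k-1+n-m') = (Qt*Gp).coeff m' := by
        intro m' hm'
        rw [← hreflqp, coeff_reflect, revAt_le hm']
      have hQt_coeff : ∀ a, Qt.coeff a = if a < k then hpoly a x else 0 := by
        intro a
        rw [hQt_def, finset_sum_coeff]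
        simp only [coeff_C_mul, coeff_X_pow, mul_ite, mul_one, mul_zero]
        rw [Finset.sum_ite_eq]
        simp [Finset.mem_range]
      have hQtGp : ∀ m', m' ≤ k → (Qt*Gp).coeff m'
          = (if m' = 0 then 1 else 0) - (if m' = k then hpoly k x else 0) := by
        intro m' hm'
        rcases lt_or_eq_of_le hm' with hlt | heq
        · have hterm : ∀ ab ∈ Finset.HasAntidiagonal.antidiagonal m', Qt.coeff ab.1 * Gp.coeff ab.2
              = hpoly ab.1 x * Gp.coeff ab.2 := by
            intro ab hab
            rw [Finset.HasAntidiagonal.mem_antidiagonal] at hab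
            rw [hQt_coeff, if_pos (by omega : ab.1 < k)]
          rw [coeff_mul, Finset.sum_congr rfl hterm, hfull m', if_neg (by omega : ¬ m' = k)]
          ring
        · subst heq
          have hmem : ((m', 0) : ℕ × ℕ) ∈ Finset.HasAntidiagonal.antidiagonal m' := by simp
          have hterm : ∀ ab ∈ (Finset.HasAntidiagonal.antidiagonal m').erase (m', 0),
              Qt.coeff ab.1 * Gp.coeff ab.2 = hpoly ab.1 x * Gp.coeff ab.2 := by
            intro ab hab
            rw [Finset.mem_erase, Finset.HasAntidiagonal.mem_antidiagonal] at hab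
            have h1 : ab.1 < m' := by
              rcases Nat.lt_or_ge ab.1 m' with h | h
              · exact h
              · exfalso
                exact hab.1 (Prod.ext (by omega) (by omega))
            rw [hQt_coeff, if_pos h1]
          have h2 := hfull m'
          rw [← Finset.add_sum_erase _ _ hmem, hGp0, mul_one,
            if_neg (by omega : ¬ m' = 0)] at h2
          rw [coeff_mul, ← Finset.add_sum_erase _ _ hmem, hQt_coeff, if_neg (by omega),
            zero_mul, zero_add, Finset.sum_congr rfl hterm,
            if_neg (by omega : ¬ m' = 0), if_pos rfl]
          linear_combination h2
      -- now put it together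
      rcases Nat.lt_or_ge (k-1+n) m with hbig | hle
      · have hdeg : (q*p).natDegree ≤ k - 1 + n :=
          natDegree_mul_le.trans (add_le_add hq_deg hp_deg)
        have h1 : (q*p).coeff m = 0 := coeff_eq_zero_of_natDegree_lt (by omega)
        rw [coeff_sub, h1, coeff_X_pow, if_neg (by omega : ¬ m = k + (n-1)),
          if_neg (by omega : ¬ m = n - 1), sub_zero]
      · set m' : ℕ := k-1+n-m with hm'_def
        have hm'k : m' ≤ k := by omega
        have h1 : (q*p).coeff m = (Qt*Gp).coeff m' := by
          rw [← hqp_coeff m' (by omega)]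
          congr 1
          omega
        rw [coeff_sub, h1, hQtGp m' hm'k, coeff_X_pow]
        by_cases hm1 : m = n-1
        · rw [if_neg (by omega : ¬ m = k + (n-1)), if_neg (by omega : ¬ m' = 0),
            if_pos (by omega : m' = k), if_pos hm1]
          ring
        · rw [if_neg (by omega : ¬ m' = k), if_neg hm1]
          by_cases hm2 : m = k + (n-1)
          · rw [if_pos hm2, if_pos (by omega : m' = 0)]
            ring
          · rw [if_neg hm2, if_neg (by omega : ¬ m' = 0)]
            ring
  refine ⟨X ^ (k + (n-1)) - q * p, fun m hmn => ?_, ?_, ?_⟩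
  · rw [key m (by omega), if_neg (by omega)]
  · rw [key (n-1) le_rfl, if_pos rfl]
  · intro y hy
    have hpy : p.eval y = 0 := by
      rw [hp_def, eval_prod]
      simpa using hy
    simp [eval_pow, hpy]

lemma det_updateRow_finset_sum {R : Type*} [CommRing R] {n : ℕ} {ι : Type*}
    (A : Matrix (Fin n) (Fin n) R) (i : Fin n) (s : Finset ι) (f : ι → Fin n → R) :
    (A.updateRow i (∑ t ∈ s, f t)).det = ∑ t ∈ s, (A.updateRow i (f t)).det := by
  classical
  induction s using Finset.induction_on with
  | empty =>
    rw [Finset.sum_empty, Finset.sum_empty]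
    exact Matrix.det_eq_zero_of_row_eq_zero i (fun j => by simp)
  | @insert a s ha ih =>
    rw [Finset.sum_insert ha, Finset.sum_insert ha, Matrix.det_updateRow_add, ih]

lemma det_pow_rev {R : Type*} [CommRing R] {n : ℕ} (x : Fin n → R) :
    (Matrix.of fun i j : Fin n => x j ^ (n - 1 - (i : ℕ))).det
      = ∏ i : Fin n, ∏ j ∈ Finset.Ioi i, (x i - x j) := by
  have h1 : (Matrix.of fun i j : Fin n => x j ^ (n - 1 - (i : ℕ)))
      = ((Matrix.vandermonde (x ∘ Fin.rev))ᵀ).submatrix ⇑Fin.revPerm ⇑Fin.revPerm := by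
    ext i j
    simp only [Matrix.submatrix_apply, Matrix.transpose_apply, Matrix.vandermonde_apply,
      Function.comp_apply, Fin.revPerm_apply, Fin.rev_rev, Matrix.of_apply]
    congr 1
    rw [Fin.val_rev]
    omega
  rw [h1, Matrix.det_submatrix_equiv_self Fin.revPerm, Matrix.det_transpose,
    Matrix.det_vandermonde]
  rw [Finset.prod_sigma', Finset.prod_sigma']
  refine Finset.prod_nbij' (fun p => ⟨Fin.rev p.2, Fin.rev p.1⟩)
    (fun p => ⟨Fin.rev p.2, Fin.rev p.1⟩) ?_ ?_ ?_ ?_ ?_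
  · intro p hp
    simp only [Finset.mem_sigma, Finset.mem_univ, Finset.mem_Ioi, true_and] at hp ⊢
    exact Fin.rev_lt_rev.mpr hp
  · intro p hp
    simp only [Finset.mem_sigma, Finset.mem_univ, Finset.mem_Ioi, true_and] at hp ⊢
    exact Fin.rev_lt_rev.mpr hp
  · intro p _; simp
  · intro p _; simp
  · intro p _
    simp [Fin.revPerm_apply, Fin.rev_rev]

lemma det_V {R : Type*} [CommRing R] (n k : ℕ) (hn : 1 ≤ n) (x : Fin n → R) :
    (Matrix.of fun i j : Fin n =>
        x j ^ (if (i : ℕ) = 0 then k + (n-1) else n - 1 - (i : ℕ))).det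
      = hpoly k x * ∏ i : Fin n, ∏ j ∈ Finset.Ioi i, (x i - x j) := by
  haveI : NeZero n := ⟨by omega⟩
  obtain ⟨P, hPdeg, hPtop, hPeval⟩ := exists_P n k hn x
  have hPnd : P.natDegree < n := by
    by_contra h
    push_neg at h
    have h0 : P.leadingCoeff = 0 := hPdeg _ h
    rw [Polynomial.leadingCoeff_eq_zero] at h0
    rw [h0, Polynomial.natDegree_zero] at h
    omega
  have hrow : ∀ j, x j ^ (k + (n-1)) = ∑ m ∈ Finset.range n, P.coeff m * x j ^ m := by
    intro j
    rw [← hPeval (x j) (Finset.prod_eq_zero (Finset.mem_univ j) (by ring))]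
    exact Polynomial.eval_eq_sum_range' hPnd (x j)
  set V : Matrix (Fin n) (Fin n) R := Matrix.of fun i j : Fin n =>
    x j ^ (if (i : ℕ) = 0 then k + (n-1) else n - 1 - (i : ℕ)) with hV_def
  have hV0 : V 0 = fun j => ∑ m ∈ Finset.range n, P.coeff m * x j ^ m := by
    funext j
    rw [hV_def, Matrix.of_apply, Fin.val_zero, if_pos rfl, hrow]
  have hsplit : V.det = ∑ m ∈ Finset.range n, P.coeff m
      * (V.updateRow 0 (fun j => x j ^ m)).det := by
    conv_lhs => rw [← Matrix.updateRow_eq_self V 0, hV0,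
      show (fun j => ∑ m ∈ Finset.range n, P.coeff m * x j ^ m)
        = ∑ m ∈ Finset.range n, (fun j => P.coeff m * x j ^ m) from
        funext fun j => by rw [Finset.sum_apply]]
    rw [det_updateRow_finset_sum]
    refine Finset.sum_congr rfl fun m _ => ?_
    exact Matrix.det_updateRow_smul V 0 (P.coeff m) (fun j => x j ^ m)
  rw [hsplit, show Finset.range n = Finset.range ((n-1)+1) by rw [Nat.sub_add_cancel hn],
    Finset.sum_range_succ]
  have hzero : ∀ m ∈ Finset.range (n-1),
      P.coeff m * (V.updateRow 0 (fun j => x j ^ m)).det = 0 := by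
    intro m hm
    rw [Finset.mem_range] at hm
    have him : (⟨n-1-m, by omega⟩ : Fin n) ≠ 0 := by
      simp only [ne_eq, Fin.ext_iff, Fin.val_zero]
      omega
    have hroweq : V.updateRow 0 (fun j => x j ^ m) 0
        = V.updateRow 0 (fun j => x j ^ m) ⟨n-1-m, by omega⟩ := by
      funext j
      rw [Matrix.updateRow_self, Matrix.updateRow_ne him, hV_def, Matrix.of_apply]
      have hval : ((⟨n-1-m, by omega⟩ : Fin n) : ℕ) = n-1-m := rfl
      rw [hval, if_neg (by omega : ¬ n-1-m = 0)]
      congr 1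
      omega
    rw [Matrix.det_zero_of_row_eq him.symm hroweq, mul_zero]
  rw [Finset.sum_eq_zero hzero, zero_add]
  have hlast : V.updateRow 0 (fun j => x j ^ (n-1))
      = Matrix.of fun i j : Fin n => x j ^ (n - 1 - (i : ℕ)) := by
    ext i j
    by_cases hi : i = 0
    · subst hi
      rw [Matrix.updateRow_self]
      simp
    · rw [Matrix.updateRow_ne hi]
      rw [hV_def, Matrix.of_apply, Matrix.of_apply, if_neg (fun h => hi (Fin.ext (by rw [h, Fin.val_zero])))]
  rw [hlast, det_pow_rev, hPtop]

end BialternantAux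

/-- Bialternant formula for one-row shapes `λ = (k, 0, …, 0)`:
`det [h_{λ_i + n - i}(1^{i-1}, x_j)]_{i,j} = h_k(x₁,…,x_n) · ∏_{i<j} (x_i - x_j)`
(indices `i, j` are `0`-indexed here, so row `i` has `i` ones adjoined and degree
`λ_{i+1} + n - (i+1) = λ_i + n - 1 - i`). -/
theorem stmt9 {R : Type*} [CommRing R] (n k : ℕ) (hn : 1 ≤ n) (x : Fin n → R) :
    Matrix.det (Matrix.of fun i j : Fin n =>
        hpoly ((if (i : ℕ) = 0 then k else 0) + (n - 1 - (i : ℕ)))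
          (Fin.append (fun _ : Fin (i : ℕ) => (1 : R)) ![x j])) =
      hpoly k x * ∏ i : Fin n, ∏ j ∈ Finset.Ioi i, (x i - x j) := by

  set L : Matrix (Fin n) (Fin n) R := Matrix.of fun i m : Fin n =>
    if (i:ℕ) = 0 ∨ (m:ℕ) = 0 then (if i = m then (1:R) else 0)
    else ((((m:ℕ)-1).choose ((i:ℕ)-1) : ℕ) : R) with hL_def
  set V : Matrix (Fin n) (Fin n) R := Matrix.of fun i j : Fin n =>
    x j ^ (if (i:ℕ) = 0 then k + (n-1) else n - 1 - (i:ℕ)) with hV_def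
  have hA : (Matrix.of fun i j : Fin n =>
      hpoly ((if (i : ℕ) = 0 then k else 0) + (n - 1 - (i : ℕ)))
        (Fin.append (fun _ : Fin (i : ℕ) => (1 : R)) ![x j])) = L * V := by
    ext i j
    rw [Matrix.of_apply, Matrix.mul_apply, hpoly_ones]
    by_cases hi : (i:ℕ) = 0
    · have hE : (if (i:ℕ) = 0 then k else 0) + (n - 1 - (i:ℕ)) = k + (n-1) := by
        rw [if_pos hi, hi]
        omega
      rw [hE]
      have hRHS : ∑ m : Fin n, L i m * V m j = x j ^ (k + (n-1)) := by
        have hterm : ∀ m : Fin n, L i m * V m j = if i = m then V m j else 0 := by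
          intro m
          rw [hL_def, Matrix.of_apply, if_pos (Or.inl hi)]
          by_cases him : i = m <;> simp [him]
        rw [Finset.sum_congr rfl (fun m _ => hterm m), Finset.sum_ite_eq]
        simp only [Finset.mem_univ, if_pos, hV_def, Matrix.of_apply, hi, if_pos rfl]
      rw [hRHS]
      rw [Finset.sum_eq_single_of_mem ((0, k + (n-1)) : ℕ × ℕ) (by simp)]
      · rw [hi]
        norm_num
      · intro ab hab habne
        rw [Finset.HasAntidiagonal.mem_antidiagonal] at hab
        have hab1 : ab.1 ≠ 0 := by
          intro h0
          exact habne (Prod.ext h0 (by omega))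
        rw [hi, zero_add, Nat.choose_eq_zero_of_lt (by omega : ab.1 - 1 < ab.1)]
        norm_num
    · -- i ≥ 1
      have hiv : 1 ≤ (i:ℕ) := by omega
      have hivlt : (i:ℕ) < n := i.isLt
      rw [if_neg hi, zero_add, Finset.Nat.sum_antidiagonal_eq_sum_range_succ_mk,
        show (n - 1 - (i:ℕ)).succ = n - (i:ℕ) by omega]
      have hterm : ∀ m : Fin n, L i m * V m j
          = if (m:ℕ) = 0 then 0
            else ((((m:ℕ)-1).choose ((i:ℕ)-1) : ℕ) : R) * x j ^ (n-1-(m:ℕ)) := by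
        intro m
        by_cases hm : (m:ℕ) = 0
        · rw [if_pos hm, hL_def, Matrix.of_apply, if_pos (Or.inr hm),
            if_neg (fun h : i = m => hi (by rw [h]; exact hm)), zero_mul]
        · rw [if_neg hm, hL_def, Matrix.of_apply, if_neg (by tauto), hV_def, Matrix.of_apply,
            if_neg hm]
      have hR : ∑ m : Fin n, L i m * V m j
          = ∑ a ∈ Finset.range (n - (i:ℕ)),
              (if (i:ℕ) + a = 0 then 0
                else (((((i:ℕ) + a)-1).choose ((i:ℕ)-1) : ℕ) : R) * x j ^ (n-1-((i:ℕ)+a))) := by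
        calc ∑ m : Fin n, L i m * V m j
            = ∑ mv ∈ Finset.range n, (if mv = 0 then 0
                else (((mv-1).choose ((i:ℕ)-1) : ℕ) : R) * x j ^ (n-1-mv)) := by
              rw [← Fin.sum_univ_eq_sum_range]
              exact Finset.sum_congr rfl fun m _ => hterm m
          _ = (∑ mv ∈ Finset.Ico 0 (i:ℕ), (if mv = 0 then 0
                else (((mv-1).choose ((i:ℕ)-1) : ℕ) : R) * x j ^ (n-1-mv)))
              + ∑ mv ∈ Finset.Ico (i:ℕ) n, (if mv = 0 then 0
                else (((mv-1).choose ((i:ℕ)-1) : ℕ) : R) * x j ^ (n-1-mv)) := by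
              rw [Finset.range_eq_Ico,
                ← Finset.sum_Ico_consecutive _ (Nat.zero_le (i:ℕ)) (le_of_lt hivlt)]
          _ = ∑ mv ∈ Finset.Ico (i:ℕ) n, (if mv = 0 then 0
                else (((mv-1).choose ((i:ℕ)-1) : ℕ) : R) * x j ^ (n-1-mv)) := by
              rw [Finset.sum_eq_zero, zero_add]
              intro mv hmv
              rw [Finset.mem_Ico] at hmv
              by_cases hm0 : mv = 0
              · rw [if_pos hm0]
              · rw [if_neg hm0, Nat.choose_eq_zero_of_lt (by omega : mv - 1 < (i:ℕ) - 1)]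
                norm_num
          _ = _ := Finset.sum_Ico_eq_sum_range _ _ _
      rw [hR]
      refine Finset.sum_congr rfl fun a ha => ?_
      rw [Finset.mem_range] at ha
      dsimp only
      rw [if_neg (by omega : ¬ (i:ℕ) + a = 0)]
      have hcs : ((i:ℕ) + a - 1).choose a = ((i:ℕ) + a - 1).choose ((i:ℕ) - 1) := by
        rw [← Nat.choose_symm (by omega : a ≤ (i:ℕ) + a - 1)]
        congr 1
        omega
      rw [hcs, show n - 1 - (i:ℕ) - a = n-1-((i:ℕ)+a) by omega]
  have htri : L.BlockTriangular id := by
    intro i m h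
    have hlt : (m:ℕ) < (i:ℕ) := h
    rw [hL_def, Matrix.of_apply]
    by_cases hm : (m:ℕ) = 0
    · rw [if_pos (Or.inr hm), if_neg (by intro he; rw [he] at hlt; omega)]
    · rw [if_neg (by omega), Nat.choose_eq_zero_of_lt (by omega : (m:ℕ)-1 < (i:ℕ)-1)]
      norm_num
  have hdetL : L.det = 1 := by
    rw [Matrix.det_of_upperTriangular htri]
    refine Finset.prod_eq_one fun i _ => ?_
    rw [hL_def, Matrix.of_apply]
    by_cases hi : (i:ℕ) = 0
    · rw [if_pos (Or.inl hi), if_pos rfl]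
    · rw [if_neg (by tauto), Nat.choose_self]
      norm_num
  rw [hA, Matrix.det_mul, hdetL, one_mul, hV_def, det_V n k hn x]
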